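/- The integral ∫₀^{2π} (cos(t/2) - (π/4)·sin t)²/(1 + cos t) dt equals π³/8 - π. Consequently, -3π/2 + (9/2)(π³/8 - π) = (3π/2)(3π²/8 - 4) < 0. -/

import Mathlib

open Real MeasureTheory intervalIntegral

noncomputable def g9 (t : ℝ) : ℝ := (1 - Real.pi/2 * Real.sin (t/2))^2 / 2

noncomputable def F9 (t : ℝ) : ℝ :=
  t/2 + Real.pi * Real.cos (t/2) + Real.pi^2/16 * (t - Real.sin t)

lemma F9_deriv (t : ℝ) : HasDerivAt F9 (g9 t) t := by
  have h1 : HasDerivAt (fun t : ℝ => t/2) (1/2) t := by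
    simpa using (hasDerivAt_id t).div_const 2
  have h2 : HasDerivAt (fun t : ℝ => Real.cos (t/2)) (-Real.sin (t/2) * (1/2)) t := by
    have := (Real.hasDerivAt_cos (t/2)).comp t ((hasDerivAt_id t).div_const 2)
    simpa [Function.comp_def] using this
  have h2' : HasDerivAt (fun t : ℝ => Real.pi * Real.cos (t/2))
      (Real.pi * (-Real.sin (t/2) * (1/2))) t := h2.const_mul _
  have h3 : HasDerivAt (fun t : ℝ => Real.pi^2/16 * (t - Real.sin t))
      (Real.pi^2/16 * (1 - Real.cos t)) t := by
    exact ((hasDerivAt_id t).sub (Real.hasDerivAt_sin t)).const_mul _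
  have h := (h1.add h2').add h3
  have key : g9 t = 1/2 + Real.pi * (-Real.sin (t/2) * (1/2)) + Real.pi^2/16 * (1 - Real.cos t) := by
    have hc2 := Real.cos_two_mul (t/2)
    rw [show 2 * (t/2) = t by ring] at hc2
    have hpy := Real.sin_sq_add_cos_sq (t/2)
    unfold g9
    nlinarith [hc2, hpy]
  rw [key]
  exact h

lemma integrand_eq (t : ℝ) (ht : Real.cos (t/2) ≠ 0) :
    (Real.cos (t/2) - Real.pi/4 * Real.sin t)^2 / (1 + Real.cos t) = g9 t := by
  have hsin : Real.sin t = 2 * Real.sin (t/2) * Real.cos (t/2) := by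
    have := Real.sin_two_mul (t/2)
    rw [show 2 * (t/2) = t by ring] at this
    linarith
  have hcos : 1 + Real.cos t = 2 * Real.cos (t/2)^2 := by
    have hc2 := Real.cos_two_mul (t/2)
    rw [show 2 * (t/2) = t by ring] at hc2
    linarith
  rw [hsin, hcos]
  unfold g9
  field_simp
  ring

theorem stmt9 :
    (∫ t in (0:ℝ)..(2*Real.pi),
        (Real.cos (t/2) - Real.pi/4 * Real.sin t)^2 / (1 + Real.cos t))
      = Real.pi^3/8 - Real.pi ∧
    -3*Real.pi/2 + 9/2 * (Real.pi^3/8 - Real.pi)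
      = 3*Real.pi/2 * (3*Real.pi^2/8 - 4) ∧
    3*Real.pi/2 * (3*Real.pi^2/8 - 4) < 0 := by
  have hpi := Real.pi_pos
  refine ⟨?_, by ring, by nlinarith [Real.pi_lt_d2]⟩
  have hcongr : (∫ t in (0:ℝ)..(2*Real.pi),
        (Real.cos (t/2) - Real.pi/4 * Real.sin t)^2 / (1 + Real.cos t))
      = ∫ t in (0:ℝ)..(2*Real.pi), g9 t := by
    apply intervalIntegral.integral_congr_ae
    have hne : ∀ᵐ t : ℝ, t ≠ Real.pi := by
      have hset : {a : ℝ | ¬ a ≠ Real.pi} = {Real.pi} := by ext x; simp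
      rw [MeasureTheory.ae_iff, hset]
      exact MeasureTheory.measure_singleton _
    filter_upwards [hne] with t ht htmem
    apply integrand_eq
    intro hc
    rw [Real.cos_eq_zero_iff] at hc
    obtain ⟨k, hk⟩ := hc
    rw [Set.uIoc_of_le (by linarith)] at htmem
    obtain ⟨h0, h2p⟩ := htmem
    have : t = (2 * k + 1) * Real.pi := by linarith [hk]
    rw [this] at h0 h2p ht
    have hk0 : (k:ℝ) = 0 := by
      by_contra hk0
      rcases lt_or_gt_of_ne (fun h : (k:ℝ) = 0 => hk0 h) with h | h
      · have hk' : k < 0 := by exact_mod_cast h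
        have hk'' : k ≤ -1 := by omega
        have : (k:ℝ) ≤ -1 := by exact_mod_cast hk''
        nlinarith
      · have : (1:ℝ) ≤ k := by exact_mod_cast h
        nlinarith
    rw [hk0] at ht
    simp at ht
  rw [hcongr]
  rw [intervalIntegral.integral_eq_sub_of_hasDerivAt (fun t _ => F9_deriv t)]
  · unfold F9
    rw [show (2 * Real.pi) / 2 = Real.pi by ring, show (0:ℝ)/2 = 0 by ring, Real.cos_pi, Real.sin_two_pi, Real.cos_zero, Real.sin_zero]
    ring
  · apply Continuous.intervalIntegrable
    unfold g9
    fun_prop
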